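/- Let P be a distribution on ℝ^d with mean μ and covariance matrix Σ ⪯ σ²I, and let ε ≤ 1/3. Given an ε-corrupted sample y₁,…,yₙ from P, the coordinate-wise median x̂ of y₁,…,yₙ (i.e., for each coordinate k, x̂_k is a median of (y₁)_k,…,(yₙ)_k) satisfies ‖x̂ − μ‖₂ ≤ 3σ√d with probability at least 1 − d·exp(−n/90). -/

import Mathlib

open MeasureTheory ProbabilityTheory Real
open scoped BigOperators ENNReal RealInnerProductSpace Classical

lemma log_three_halves_ge : (2:ℝ)/5 ≤ Real.log (3/2) := by
  rw [Real.le_log_iff_exp_le (by norm_num : (0:ℝ) < 3/2)]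
  by_contra hc
  push_neg at hc
  have h5 : Real.exp (2/5) ^ 5 = Real.exp 2 := by
    rw [← Real.exp_nat_mul]; norm_num
  have h2 : Real.exp 2 ≤ (3/2:ℝ)^5 := by
    have := Real.exp_one_lt_d9
    have h : Real.exp 2 = Real.exp 1 ^ 2 := by rw [← Real.exp_nat_mul]; norm_num
    rw [h]; nlinarith [Real.exp_pos 1]
  have := pow_lt_pow_left₀ hc (by norm_num : (0:ℝ) ≤ 3/2) (by norm_num : (5:ℕ) ≠ 0)
  rw [h5] at this
  linarith

/-- Chernoff bound: for independent indicator variables with success probability `≤ 1/9`,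
the probability that at least `n/6` of them are `1` is at most `exp(-n/90)`. -/
lemma chernoff_indicator {Ω : Type} [MeasureSpace Ω] [IsProbabilityMeasure (ℙ : Measure Ω)]
    {n : ℕ} (A : Fin n → Set Ω) (hA : ∀ i, MeasurableSet (A i))
    (hindep : iIndepFun
      (fun i ω => if ω ∈ A i then (1:ℝ) else 0) ℙ)
    (hp : ∀ i, (ℙ (A i)).toReal ≤ 1/9) :
    ℙ {ω | (n:ℝ)/6 ≤ ∑ i, (if ω ∈ A i then (1:ℝ) else 0)} ≤
      ENNReal.ofReal (Real.exp (-(n:ℝ)/90)) := by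
  set Z : Fin n → Ω → ℝ := fun i ω => if ω ∈ A i then (1:ℝ) else 0 with hZdef
  set t : ℝ := Real.log (3/2) with htdef
  have ht25 : (2:ℝ)/5 ≤ t := log_three_halves_ge
  have ht0 : 0 ≤ t := le_trans (by norm_num) ht25
  have hexpt : Real.exp t = 3/2 := Real.exp_log (by norm_num)
  have hZmeas : ∀ i, Measurable (Z i) := fun i =>
    Measurable.ite (hA i) measurable_const measurable_const
  -- mgf of each indicator
  have hmgf : ∀ i, mgf (Z i) ℙ t ≤ Real.exp (1/18) := by
    intro i
    have heq : (fun ω => Real.exp (t * Z i ω)) =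
        fun ω => (A i).indicator (fun _ => Real.exp t - 1) ω + 1 := by
      funext ω
      by_cases h : ω ∈ A i <;> simp [hZdef, h, Set.indicator]
    have hval : mgf (Z i) ℙ t = (ℙ (A i)).toReal * (Real.exp t - 1) + 1 := by
      rw [mgf, heq, integral_add ((integrable_const _).indicator (hA i)) (integrable_const 1)]
      rw [integral_indicator_const _ (hA i)]
      simp [smul_eq_mul, measureReal_def]
    rw [hval, hexpt]
    have h1 : (ℙ (A i)).toReal * ((3:ℝ)/2 - 1) + 1 ≤ 1/18 + 1 := by
      have := hp i
      nlinarith [ENNReal.toReal_nonneg (a := ℙ (A i))]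
    calc (ℙ (A i)).toReal * ((3:ℝ)/2 - 1) + 1 ≤ 1/18 + 1 := h1
      _ ≤ Real.exp (1/18) := by linarith [Real.add_one_le_exp ((1:ℝ)/18)]
  -- the sum
  set S : Ω → ℝ := ∑ i, Z i with hSdef
  have hSapp : ∀ ω, S ω = ∑ i, Z i ω := fun ω => by
    rw [hSdef]; simp [Finset.sum_apply]
  have hSmeas : Measurable S := by
    have : Measurable fun ω => ∑ i, Z i ω := Finset.measurable_sum _ fun i _ => hZmeas i
    convert this using 1
    funext ω; exact hSapp ω
  have hSle : ∀ ω, S ω ≤ n := by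
    intro ω
    rw [hSapp]
    calc ∑ i, Z i ω ≤ ∑ _i : Fin n, (1:ℝ) :=
          Finset.sum_le_sum fun i _ => by by_cases h : ω ∈ A i <;> simp [hZdef, h]
      _ = n := by simp
  have hint : Integrable (fun ω => Real.exp (t * S ω)) ℙ := by
    refine Integrable.mono' (integrable_const (Real.exp (t * n)))
      ((hSmeas.const_mul t).exp.aestronglyMeasurable) (ae_of_all _ fun ω => ?_)
    rw [Real.norm_eq_abs, abs_of_pos (Real.exp_pos _)]
    exact Real.exp_le_exp.mpr (mul_le_mul_of_nonneg_left (hSle ω) ht0)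
  have hchern := measure_ge_le_exp_mul_mgf ((n:ℝ)/6) ht0 hint
  have hmgfS : mgf S ℙ t = ∏ i, mgf (Z i) ℙ t := by
    rw [hSdef]; exact hindep.mgf_sum hZmeas Finset.univ
  have hprod : ∏ i, mgf (Z i) ℙ t ≤ Real.exp ((n:ℝ)/18) := by
    calc ∏ i, mgf (Z i) ℙ t ≤ ∏ _i : Fin n, Real.exp (1/18) :=
          Finset.prod_le_prod (fun i _ => mgf_nonneg) (fun i _ => hmgf i)
      _ = Real.exp (1/18) ^ n := by simp
      _ = Real.exp ((n:ℝ)/18) := by rw [← Real.exp_nat_mul]; ring_nf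
  have hbound : Real.exp (-t * ((n:ℝ)/6)) * mgf S ℙ t ≤ Real.exp (-(n:ℝ)/90) := by
    rw [hmgfS]
    calc Real.exp (-t * ((n:ℝ)/6)) * ∏ i, mgf (Z i) ℙ t
        ≤ Real.exp (-t * ((n:ℝ)/6)) * Real.exp ((n:ℝ)/18) := by
          exact mul_le_mul_of_nonneg_left hprod (le_of_lt (Real.exp_pos _))
      _ = Real.exp (-t * ((n:ℝ)/6) + (n:ℝ)/18) := by rw [← Real.exp_add]
      _ ≤ Real.exp (-(n:ℝ)/90) := by
          apply Real.exp_le_exp.mpr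
          have hn : (0:ℝ) ≤ (n:ℝ) := Nat.cast_nonneg n
          nlinarith
  have hset : {ω | (n:ℝ)/6 ≤ ∑ i, (if ω ∈ A i then (1:ℝ) else 0)} = {ω | (n:ℝ)/6 ≤ S ω} := by
    ext ω; simp [hSapp, hZdef]
  rw [hset]
  calc ℙ {ω | (n:ℝ)/6 ≤ S ω}
      = ENNReal.ofReal (ℙ {ω | (n:ℝ)/6 ≤ S ω}).toReal :=
        (ENNReal.ofReal_toReal (measure_ne_top _ _)).symm
    _ ≤ ENNReal.ofReal (Real.exp (-(n:ℝ)/90)) :=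
        ENNReal.ofReal_le_ofReal (hchern.trans hbound)


/-- Markov: if `E[X²] ≤ σ²` then `ℙ(|X| > 3σ) ≤ 1/9`. -/
lemma tail_prob_le {Ω : Type} [MeasureSpace Ω] [IsProbabilityMeasure (ℙ : Measure Ω)]
    (X : Ω → ℝ) (σ : ℝ) (hσ : 0 ≤ σ)
    (hint : Integrable (fun ω => (X ω)^2) ℙ)
    (hvar : ∫ ω, (X ω)^2 ≤ σ^2) :
    (ℙ {ω | 3*σ < |X ω|}).toReal ≤ 1/9 := by
  rcases eq_or_lt_of_le hσ with hσ0 | hσpos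
  · -- σ = 0 : X = 0 a.e.
    have hz : ∫ ω, (X ω)^2 = 0 :=
      le_antisymm (by simpa [← hσ0] using hvar) (integral_nonneg fun ω => sq_nonneg _)
    have hX0 : (fun ω => (X ω)^2) =ᵐ[ℙ] 0 :=
      (integral_eq_zero_iff_of_nonneg (fun ω => sq_nonneg _) hint).mp hz
    have : ℙ {ω | 3*σ < |X ω|} = 0 := by
      have hae : ∀ᵐ ω ∂ℙ, (X ω)^2 = 0 := hX0
      refine measure_mono_null ?_ hae
      intro ω hω h
      simp only [Set.mem_setOf_eq] at hω h
      rw [← hσ0] at hω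
      nlinarith [abs_nonneg (X ω), sq_abs (X ω)]
    simp [this]
  · -- σ > 0 : Markov on X²
    have hsub : {ω | 3*σ < |X ω|} ⊆ {ω | 9*σ^2 ≤ (X ω)^2} := by
      intro ω hω
      simp only [Set.mem_setOf_eq] at hω ⊢
      nlinarith [sq_abs (X ω), abs_nonneg (X ω)]
    have hmarkov := mul_meas_ge_le_integral_of_nonneg
      (ae_of_all _ fun ω => sq_nonneg (X ω)) hint (9*σ^2)
    have hmono : (ℙ {ω | 3*σ < |X ω|}).toReal ≤ (ℙ {ω | 9*σ^2 ≤ (X ω)^2}).toReal :=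
      ENNReal.toReal_mono (measure_ne_top _ _) (measure_mono hsub)
    have h9 : (0:ℝ) < 9*σ^2 := by positivity
    have hkey := hmarkov.trans hvar
    calc (ℙ {ω | 3*σ < |X ω|}).toReal ≤ (ℙ {ω | 9*σ^2 ≤ (X ω)^2}).toReal := hmono
      _ ≤ 1/9 := by
        rw [le_div_iff₀ (by norm_num : (0:ℝ) < 9)]
        simp only [measureReal_def] at hkey
        nlinarith [hkey]


/-- the coordinate-wise median of an `ε`-corrupted sample (`ε ≤ 1/3`)
from a distribution with mean `μ` and covariance `⪯ σ²I` is within `3σ√d` of `μ`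
with probability at least `1 − d·exp(−n/90)`. -/
theorem coordinatewise_median_bound {Ω : Type} [MeasureSpace Ω]
    [IsProbabilityMeasure (ℙ : Measure Ω)]
    {n d : ℕ} (Ytilde Y : Fin n → Ω → EuclideanSpace ℝ (Fin d))
    (hmeasYt : ∀ i, Measurable (Ytilde i)) (hmeasY : ∀ i, Measurable (Y i))
    (hindep : iIndepFun Ytilde ℙ)
    (hid : ∀ i j, IdentDistrib (Ytilde i) (Ytilde j) ℙ ℙ)
    (μ : EuclideanSpace ℝ (Fin d)) (σ : ℝ) (hσ : 0 ≤ σ)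
    (hint : ∀ i, Integrable (Ytilde i) ℙ)
    (hmean : ∀ i, ∫ ω, Ytilde i ω = μ)
    (hcovint : ∀ i (v : EuclideanSpace ℝ (Fin d)),
      Integrable (fun ω => (⟪Ytilde i ω - μ, v⟫)^2) ℙ)
    (hcov : ∀ i, ∀ v : EuclideanSpace ℝ (Fin d), ‖v‖ = 1 →
      ∫ ω, (⟪Ytilde i ω - μ, v⟫)^2 ≤ σ^2)
    (ε : ℝ) (hε0 : 0 ≤ ε) (hε : ε ≤ 1/3)
    (hcorrupt : ∀ᵐ ω ∂ℙ,
      ((Finset.univ.filter (fun i => Y i ω ≠ Ytilde i ω)).card : ℝ) ≤ ε * n)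
    (xhat : Ω → EuclideanSpace ℝ (Fin d))
    (hmedian : ∀ ω, ∀ k : Fin d,
      (n : ℝ)/2 ≤ ((Finset.univ.filter (fun i => Y i ω k ≤ xhat ω k)).card : ℝ) ∧
      (n : ℝ)/2 ≤ ((Finset.univ.filter (fun i => xhat ω k ≤ Y i ω k)).card : ℝ)) :
    ENNReal.ofReal (1 - d * Real.exp (-(n:ℝ)/90)) ≤
      ℙ {ω | ‖xhat ω - μ‖ ≤ 3 * σ * Real.sqrt d} := by
  classical
  -- coordinate evaluation is measurable
  have hproj : ∀ k : Fin d, Measurable fun x : EuclideanSpace ℝ (Fin d) => x k := fun k =>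
    (EuclideanSpace.proj (𝕜 := ℝ) k).continuous.measurable
  -- bad events per coordinate
  set Ek : Fin d → Set Ω := fun k =>
    {ω | (n:ℝ)/6 ≤ ((Finset.univ.filter
      (fun i => 3*σ < |Ytilde i ω k - μ k|)).card : ℝ)} with hEkdef
  set C : Set Ω := {ω |
    ((Finset.univ.filter (fun i => Y i ω ≠ Ytilde i ω)).card : ℝ) ≤ ε * n} with hCdef
  have hCnull : ℙ Cᶜ = 0 := by
    have := ae_iff.mp hcorrupt
    simpa [hCdef, Set.compl_setOf] using this
  -- the good set is contained in the target
  have hGsub : (C ∩ (⋃ k, Ek k)ᶜ) ⊆ {ω | ‖xhat ω - μ‖ ≤ 3 * σ * Real.sqrt d} := by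
    rintro ω ⟨hωC, hωE⟩
    simp only [Set.mem_compl_iff, Set.mem_iUnion, not_exists] at hωE
    have hcoordb : ∀ k : Fin d, |xhat ω k - μ k| ≤ 3*σ := by
      intro k
      have hB : ((Finset.univ.filter
          (fun i => 3*σ < |Ytilde i ω k - μ k|)).card : ℝ) < (n:ℝ)/6 := by
        have := hωE k
        simp only [hEkdef, Set.mem_setOf_eq, not_le] at this
        exact this
      have hεn : ε * n ≤ (n:ℝ)/3 := by
        have := mul_le_mul_of_nonneg_right hε (Nat.cast_nonneg n)
        linarith
      have hωC' : ((Finset.univ.filter (fun i => Y i ω ≠ Ytilde i ω)).card : ℝ) ≤ ε * n := hωC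
      have hupper : xhat ω k ≤ μ k + 3*σ := by
        by_contra h
        push_neg at h
        have hsub : (Finset.univ.filter (fun i => xhat ω k ≤ Y i ω k)) ⊆
            (Finset.univ.filter (fun i => Y i ω ≠ Ytilde i ω)) ∪
            (Finset.univ.filter (fun i => 3*σ < |Ytilde i ω k - μ k|)) := by
          intro i hi
          simp only [Finset.mem_filter, Finset.mem_union, Finset.mem_univ, true_and] at hi ⊢
          by_cases hY : Y i ω = Ytilde i ω
          · right
            rw [hY] at hi
            have : 3*σ < Ytilde i ω k - μ k := by linarith
            exact lt_of_lt_of_le this (le_abs_self _)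
          · exact Or.inl hY
        have hcard : ((Finset.univ.filter (fun i => xhat ω k ≤ Y i ω k)).card : ℝ) ≤
            ((Finset.univ.filter (fun i => Y i ω ≠ Ytilde i ω)).card : ℝ) +
            ((Finset.univ.filter (fun i => 3*σ < |Ytilde i ω k - μ k|)).card : ℝ) := by
          have h1 := Finset.card_le_card hsub
          have h2 := Finset.card_union_le
            (Finset.univ.filter (fun i => Y i ω ≠ Ytilde i ω))
            (Finset.univ.filter (fun i => 3*σ < |Ytilde i ω k - μ k|))
          exact_mod_cast le_trans h1 h2
        have hmed := (hmedian ω k).2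
        linarith
      have hlower : μ k - 3*σ ≤ xhat ω k := by
        by_contra h
        push_neg at h
        have hsub : (Finset.univ.filter (fun i => Y i ω k ≤ xhat ω k)) ⊆
            (Finset.univ.filter (fun i => Y i ω ≠ Ytilde i ω)) ∪
            (Finset.univ.filter (fun i => 3*σ < |Ytilde i ω k - μ k|)) := by
          intro i hi
          simp only [Finset.mem_filter, Finset.mem_union, Finset.mem_univ, true_and] at hi ⊢
          by_cases hY : Y i ω = Ytilde i ω
          · right
            rw [hY] at hi
            have : 3*σ < -(Ytilde i ω k - μ k) := by linarith
            exact lt_of_lt_of_le this (neg_le_abs _)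
          · exact Or.inl hY
        have hcard : ((Finset.univ.filter (fun i => Y i ω k ≤ xhat ω k)).card : ℝ) ≤
            ((Finset.univ.filter (fun i => Y i ω ≠ Ytilde i ω)).card : ℝ) +
            ((Finset.univ.filter (fun i => 3*σ < |Ytilde i ω k - μ k|)).card : ℝ) := by
          have h1 := Finset.card_le_card hsub
          have h2 := Finset.card_union_le
            (Finset.univ.filter (fun i => Y i ω ≠ Ytilde i ω))
            (Finset.univ.filter (fun i => 3*σ < |Ytilde i ω k - μ k|))
          exact_mod_cast le_trans h1 h2
        have hmed := (hmedian ω k).1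
        linarith
      exact abs_le.mpr ⟨by linarith, by linarith⟩
    -- deduce the norm bound
    simp only [Set.mem_setOf_eq]
    rw [EuclideanSpace.norm_eq]
    have hsum : (∑ k, ‖(xhat ω - μ) k‖^2) ≤ (d:ℝ) * (3*σ)^2 := by
      calc (∑ k, ‖(xhat ω - μ) k‖^2) ≤ ∑ _k : Fin d, (3*σ)^2 := by
            refine Finset.sum_le_sum fun k _ => ?_
            have h1 : ‖(xhat ω - μ) k‖ = |xhat ω k - μ k| := by
              simp [PiLp.sub_apply, Real.norm_eq_abs]
            rw [h1]
            have := hcoordb k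
            nlinarith [abs_nonneg (xhat ω k - μ k)]
        _ = (d:ℝ) * (3*σ)^2 := by simp [Finset.sum_const, mul_comm]
    calc Real.sqrt (∑ k, ‖(xhat ω - μ) k‖^2) ≤ Real.sqrt ((d:ℝ) * (3*σ)^2) :=
          Real.sqrt_le_sqrt hsum
      _ = 3 * σ * Real.sqrt d := by
          rw [Real.sqrt_mul (Nat.cast_nonneg d), Real.sqrt_sq (by linarith)]
          ring
  -- tail bound for each coordinate
  have hEk : ∀ k : Fin d, ℙ (Ek k) ≤ ENNReal.ofReal (Real.exp (-(n:ℝ)/90)) := by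
    intro k
    set A : Fin n → Set Ω := fun i => {ω | 3*σ < |Ytilde i ω k - μ k|} with hAdef
    have hameas : ∀ i, MeasurableSet (A i) := by
      intro i
      exact measurableSet_lt measurable_const
        ((((hproj k).comp (hmeasYt i)).sub measurable_const).abs)
    have hindep' : iIndepFun
        (fun i ω => if ω ∈ A i then (1:ℝ) else 0) ℙ := by
      have hg : Measurable (fun x : EuclideanSpace ℝ (Fin d) =>
          if 3*σ < |x k - μ k| then (1:ℝ) else 0) := by
        exact Measurable.ite
          (measurableSet_lt measurable_const (((hproj k).sub measurable_const).abs))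
          measurable_const measurable_const
      exact hindep.comp (fun _ x => if 3*σ < |x k - μ k| then (1:ℝ) else 0) (fun _ => hg)
    have hp : ∀ i, (ℙ (A i)).toReal ≤ 1/9 := by
      intro i
      have hinner : ∀ ω, (⟪Ytilde i ω - μ, EuclideanSpace.single k (1:ℝ)⟫)^2 =
          (Ytilde i ω k - μ k)^2 := by
        intro ω
        rw [EuclideanSpace.inner_single_right]
        simp [PiLp.sub_apply]
      have hint2 : Integrable (fun ω => (Ytilde i ω k - μ k)^2) ℙ := by
        have := hcovint i (EuclideanSpace.single k (1:ℝ))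
        simpa [hinner] using this
      have hvar2 : ∫ ω, (Ytilde i ω k - μ k)^2 ≤ σ^2 := by
        have := hcov i (EuclideanSpace.single k (1:ℝ)) (by simp)
        simpa [hinner] using this
      exact tail_prob_le (fun ω => Ytilde i ω k - μ k) σ hσ hint2 hvar2
    have hchern := chernoff_indicator A hameas hindep' hp
    have hset : Ek k = {ω | (n:ℝ)/6 ≤ ∑ i, (if ω ∈ A i then (1:ℝ) else 0)} := by
      ext ω
      simp only [hEkdef, hAdef, Set.mem_setOf_eq, Finset.card_filter]
      rw [Nat.cast_sum]
      simp [apply_ite (Nat.cast : ℕ → ℝ)]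
    rw [hset]
    exact hchern
  -- union bound
  have hbad : ℙ ((C ∩ (⋃ k, Ek k)ᶜ)ᶜ) ≤ ENNReal.ofReal (d * Real.exp (-(n:ℝ)/90)) := by
    rw [Set.compl_inter, compl_compl]
    calc ℙ (Cᶜ ∪ ⋃ k, Ek k) ≤ ℙ Cᶜ + ℙ (⋃ k, Ek k) := measure_union_le _ _
      _ = ℙ (⋃ k, Ek k) := by rw [hCnull, zero_add]
      _ ≤ ∑' k, ℙ (Ek k) := measure_iUnion_le _
      _ = ∑ k, ℙ (Ek k) := tsum_fintype _
      _ ≤ ∑ _k : Fin d, ENNReal.ofReal (Real.exp (-(n:ℝ)/90)) :=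
          Finset.sum_le_sum fun k _ => hEk k
      _ = (d : ℝ≥0∞) * ENNReal.ofReal (Real.exp (-(n:ℝ)/90)) := by
          simp [Finset.sum_const, nsmul_eq_mul]
      _ = ENNReal.ofReal (d * Real.exp (-(n:ℝ)/90)) := by
          rw [ENNReal.ofReal_mul (Nat.cast_nonneg d), ENNReal.ofReal_natCast]
  have h1 : (1:ℝ≥0∞) ≤ ℙ (C ∩ (⋃ k, Ek k)ᶜ) + ℙ ((C ∩ (⋃ k, Ek k)ᶜ)ᶜ) := by
    calc (1:ℝ≥0∞) = ℙ (Set.univ : Set Ω) := measure_univ.symm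
      _ = ℙ ((C ∩ (⋃ k, Ek k)ᶜ) ∪ (C ∩ (⋃ k, Ek k)ᶜ)ᶜ) := by rw [Set.union_compl_self]
      _ ≤ _ := measure_union_le _ _
  calc ENNReal.ofReal (1 - d * Real.exp (-(n:ℝ)/90))
      = ENNReal.ofReal 1 - ENNReal.ofReal (d * Real.exp (-(n:ℝ)/90)) :=
        ENNReal.ofReal_sub _ (by positivity)
    _ = 1 - ENNReal.ofReal (d * Real.exp (-(n:ℝ)/90)) := by rw [ENNReal.ofReal_one]
    _ ≤ 1 - ℙ ((C ∩ (⋃ k, Ek k)ᶜ)ᶜ) := tsub_le_tsub_left hbad 1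
    _ ≤ ℙ (C ∩ (⋃ k, Ek k)ᶜ) := by
        rw [tsub_le_iff_right]
        exact h1
    _ ≤ ℙ {ω | ‖xhat ω - μ‖ ≤ 3 * σ * Real.sqrt d} := measure_mono hGsub
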